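/- Let 0 ≤ q < 1, c > 0, and define F(y) = (1-q)·e^{c((1-q)y - 1)} / (1 - q e^{c((1-q)y - 1)})² for y with q e^{c((1-q)y-1)} < 1. Then F(1/(1-q)) = 1/(1-q) and F'(1/(1-q)) = c(1+q)/(1-q), i.e., the derivative of F at y = E[X] equals c/c^cr(q). -/

import Mathlib

/-- The function F(y) = (1-q) e^{c((1-q)y-1)} / (1 - q e^{c((1-q)y-1)})² satisfies
F(1/(1-q)) = 1/(1-q) and F'(1/(1-q)) = c(1+q)/(1-q) = c/c^cr(q). -/
theorem stmt_12 (q c : ℝ) (hq0 : 0 ≤ q) (hq1 : q < 1) (hc : 0 < c) :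
    (fun y : ℝ => (1 - q) * Real.exp (c * ((1 - q) * y - 1)) /
        (1 - q * Real.exp (c * ((1 - q) * y - 1))) ^ 2) (1 / (1 - q)) = 1 / (1 - q) ∧
    HasDerivAt (fun y : ℝ => (1 - q) * Real.exp (c * ((1 - q) * y - 1)) /
        (1 - q * Real.exp (c * ((1 - q) * y - 1))) ^ 2)
      (c * (1 + q) / (1 - q)) (1 / (1 - q)) := by
  have h1q : (1:ℝ) - q ≠ 0 := by linarith
  set y0 : ℝ := 1 / (1 - q) with hy0def
  have hy0 : c * ((1 - q) * y0 - 1) = 0 := by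
    rw [hy0def]; field_simp; ring
  have hval : (fun y : ℝ => (1 - q) * Real.exp (c * ((1 - q) * y - 1)) /
      (1 - q * Real.exp (c * ((1 - q) * y - 1))) ^ 2) y0 = 1 / (1 - q) := by
    simp only [hy0, Real.exp_zero, mul_one]
    rw [show (1:ℝ) - q = (1 - q) by ring]
    field_simp
  refine ⟨hval, ?_⟩
  have hlin : HasDerivAt (fun y : ℝ => c * ((1 - q) * y - 1)) (c * (1 - q)) y0 := by
    simpa using (((hasDerivAt_id y0).const_mul (1 - q)).sub_const 1).const_mul c
  have hu : HasDerivAt (fun y : ℝ => Real.exp (c * ((1 - q) * y - 1)))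
      (Real.exp (c * ((1 - q) * y0 - 1)) * (c * (1 - q))) y0 := hlin.exp
  have hN : HasDerivAt (fun y : ℝ => (1 - q) * Real.exp (c * ((1 - q) * y - 1)))
      ((1 - q) * (Real.exp (c * ((1 - q) * y0 - 1)) * (c * (1 - q)))) y0 := hu.const_mul _
  have hDin : HasDerivAt (fun y : ℝ => 1 - q * Real.exp (c * ((1 - q) * y - 1)))
      (-(q * (Real.exp (c * ((1 - q) * y0 - 1)) * (c * (1 - q))))) y0 :=
    (hu.const_mul q).const_sub 1
  have hD : HasDerivAt (fun y : ℝ => (1 - q * Real.exp (c * ((1 - q) * y - 1))) ^ 2)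
      (2 * (1 - q * Real.exp (c * ((1 - q) * y0 - 1))) ^ 1 *
        (-(q * (Real.exp (c * ((1 - q) * y0 - 1)) * (c * (1 - q)))))) y0 := hDin.pow 2
  have hDne : (1 - q * Real.exp (c * ((1 - q) * y0 - 1))) ^ 2 ≠ 0 := by
    simp [hy0, Real.exp_zero]
    intro h; nlinarith
  have := hN.div hD hDne
  refine this.congr_deriv ?_
  simp only [hy0, Real.exp_zero, mul_one, pow_one]
  field_simp
  ring
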